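/- The universal state inverter preserves positivity: if ρ is a positive semidefinite matrix on ℂ^{dA} ⊗ ℂ^{dB}, then ρ̃ is positive semidefinite. In particular, ⟨ψ| ρ̃ |ψ⟩ ≥ 0 for every vector ψ. -/

import Mathlib

open Matrix Kronecker
open scoped ComplexOrder

noncomputable section

/-- Partial trace over the second factor. -/
def ptraceA {dA dB : ℕ} (ρ : Matrix (Fin dA × Fin dB) (Fin dA × Fin dB) ℂ) :
    Matrix (Fin dA) (Fin dA) ℂ :=
  Matrix.of fun i i' => ∑ j, ρ (i, j) (i', j)

/-- Partial trace over the first factor. -/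
def ptraceB {dA dB : ℕ} (ρ : Matrix (Fin dA × Fin dB) (Fin dA × Fin dB) ℂ) :
    Matrix (Fin dB) (Fin dB) ℂ :=
  Matrix.of fun j j' => ∑ i, ρ (i, j) (i, j')

/-- The universal state inverter ρ ↦ ρ̃. -/
def inverter {dA dB : ℕ} (ρ : Matrix (Fin dA × Fin dB) (Fin dA × Fin dB) ℂ) :
    Matrix (Fin dA × Fin dB) (Fin dA × Fin dB) ℂ :=
  (Matrix.trace ρᴴ) • (1 : Matrix (Fin dA × Fin dB) (Fin dA × Fin dB) ℂ)
    - (ptraceA ρ)ᴴ ⊗ₖ (1 : Matrix (Fin dB) (Fin dB) ℂ)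
    - (1 : Matrix (Fin dA) (Fin dA) ℂ) ⊗ₖ (ptraceB ρ)ᴴ
    + ρᴴ

/-- The rank-one projector |ψ⟩⟨ψ|. -/
def outer {dA dB : ℕ} (ψ : Fin dA × Fin dB → ℂ) :
    Matrix (Fin dA × Fin dB) (Fin dA × Fin dB) ℂ :=
  Matrix.vecMulVec ψ (star ψ)

/-- A density matrix: positive semidefinite with trace one. -/
def IsDensityMatrix {m : Type*} [Fintype m] [DecidableEq m] (ρ : Matrix m m ℂ) : Prop :=
  ρ.PosSemidef ∧ ρ.trace = 1

/-- The pure-state tangle ⟨ψ| ρ̃_ψ |ψ⟩ with ρ_ψ = |ψ⟩⟨ψ|. -/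
def pureTangle {dA dB : ℕ} (ψ : Fin dA × Fin dB → ℂ) : ℝ :=
  (star ψ ⬝ᵥ (inverter (outer ψ) *ᵥ ψ)).re

/-- The I-tangle: the infimum of Σᵢ pᵢ ⟨ψᵢ| ρ̃ᵢ |ψᵢ⟩ over pure-state decompositions of ρ. -/
def Itangle {dA dB : ℕ} (ρ : Matrix (Fin dA × Fin dB) (Fin dA × Fin dB) ℂ) : ℝ :=
  sInf { t | ∃ (n : ℕ) (p : Fin n → ℝ) (ψ : Fin n → (Fin dA × Fin dB → ℂ)),
    (∀ i, 0 < p i) ∧ (∑ i, p i = 1) ∧ (∀ i, star (ψ i) ⬝ᵥ ψ i = 1) ∧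
    ρ = ∑ i, (p i : ℂ) • outer (ψ i) ∧
    t = ∑ i, p i * pureTangle (ψ i) }

namespace InverterAux

variable {dA dB : ℕ}

lemma star_ite (P : Prop) [Decidable P] (a b : ℂ) :
    star (if P then a else b) = if P then star a else star b := apply_ite star P a b

/-- The (conjugated) Kraus vector of the universal inverter. -/
def kvec (ψ : Fin dA × Fin dB → ℂ) (i i' : Fin dA) (j j' : Fin dB) :
    Fin dA × Fin dB → ℂ := fun x =>
  (if x = (i, j) then star (ψ (i', j')) else 0)
  - (if x = (i', j) then star (ψ (i, j')) else 0)
  - (if x = (i, j') then star (ψ (i', j)) else 0)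
  + (if x = (i', j') then star (ψ (i, j)) else 0)

lemma hswapI (f : Fin dA → Fin dA → Fin dB → Fin dB → ℂ) :
    (∑ i, ∑ i', ∑ j, ∑ j', f i i' j j') = ∑ i, ∑ i', ∑ j, ∑ j', f i' i j j' :=
  Finset.sum_comm

lemma hswapJ (f : Fin dA → Fin dA → Fin dB → Fin dB → ℂ) :
    (∑ i, ∑ i', ∑ j, ∑ j', f i i' j j') = ∑ i, ∑ i', ∑ j, ∑ j', f i i' j' j :=
  Finset.sum_congr rfl fun _ _ => Finset.sum_congr rfl fun _ _ => Finset.sum_comm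

lemma hswap23 (f : Fin dA → Fin dA → Fin dB → Fin dB → ℂ) :
    (∑ i, ∑ i', ∑ j, ∑ j', f i i' j j') = ∑ i, ∑ j, ∑ i', ∑ j', f i i' j j' :=
  Finset.sum_congr rfl fun _ _ => Finset.sum_comm

section
variable (ρ : Matrix (Fin dA × Fin dB) (Fin dA × Fin dB) ℂ) (ψ : Fin dA × Fin dB → ℂ)

lemma term_eq (i i' : Fin dA) (j j' : Fin dB) :
    star (kvec ψ i i' j j') ⬝ᵥ ρ *ᵥ kvec ψ i i' j j' =
    ((ψ (i',j') * (ρ (i,j) (i,j) * star (ψ (i',j')))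
      - ψ (i',j') * (ρ (i,j) (i',j) * star (ψ (i,j')))
      - ψ (i',j') * (ρ (i,j) (i,j') * star (ψ (i',j)))
      + ψ (i',j') * (ρ (i,j) (i',j') * star (ψ (i,j))))
     - (ψ (i,j') * (ρ (i',j) (i,j) * star (ψ (i',j')))
      - ψ (i,j') * (ρ (i',j) (i',j) * star (ψ (i,j')))
      - ψ (i,j') * (ρ (i',j) (i,j') * star (ψ (i',j)))
      + ψ (i,j') * (ρ (i',j) (i',j') * star (ψ (i,j))))
     - (ψ (i',j) * (ρ (i,j') (i,j) * star (ψ (i',j')))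
      - ψ (i',j) * (ρ (i,j') (i',j) * star (ψ (i,j')))
      - ψ (i',j) * (ρ (i,j') (i,j') * star (ψ (i',j)))
      + ψ (i',j) * (ρ (i,j') (i',j') * star (ψ (i,j))))
     + (ψ (i,j) * (ρ (i',j') (i,j) * star (ψ (i',j')))
      - ψ (i,j) * (ρ (i',j') (i',j) * star (ψ (i,j')))
      - ψ (i,j) * (ρ (i',j') (i,j') * star (ψ (i',j)))
      + ψ (i,j) * (ρ (i',j') (i',j') * star (ψ (i,j))))) := by
  simp only [kvec, dotProduct, mulVec, Pi.star_apply, star_add, star_sub, star_ite, star_zero,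
    star_star, sub_mul, add_mul, mul_sub, mul_add, ite_mul, mul_ite, mul_zero, zero_mul,
    Finset.sum_sub_distrib, Finset.sum_add_distrib, Finset.sum_ite_eq', Finset.mem_univ, if_true]
  ring

lemma t11 : (∑ i, ∑ i', ∑ j, ∑ j', ψ (i',j') * (ρ (i,j) (i,j) * star (ψ (i',j'))))
    = (∑ x, ρ x x) * (∑ x, star (ψ x) * ψ x) := by
  rw [Finset.sum_mul, Fintype.sum_prod_type]
  rw [hswap23 (fun i i' j j' => ψ (i',j') * (ρ (i,j) (i,j) * star (ψ (i',j'))))]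
  refine Finset.sum_congr rfl fun i _ => Finset.sum_congr rfl fun j _ => ?_
  rw [Fintype.sum_prod_type, Finset.mul_sum]
  refine Finset.sum_congr rfl fun i' _ => ?_
  rw [Finset.mul_sum]
  exact Finset.sum_congr rfl fun j' _ => by ring

lemma t12 : (∑ i, ∑ i', ∑ j, ∑ j', ψ (i',j') * (ρ (i,j) (i',j) * star (ψ (i,j'))))
    = ∑ i, ∑ i', (∑ j, ρ (i,j) (i',j)) * (∑ j, star (ψ (i,j)) * ψ (i',j)) := by
  refine Finset.sum_congr rfl fun i _ => Finset.sum_congr rfl fun i' _ => ?_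
  rw [Fintype.sum_mul_sum]
  exact Finset.sum_congr rfl fun j _ => Finset.sum_congr rfl fun j' _ => by ring

lemma t13 : (∑ i, ∑ i', ∑ j, ∑ j', ψ (i',j') * (ρ (i,j) (i,j') * star (ψ (i',j))))
    = ∑ j, ∑ j', (∑ i, ρ (i,j) (i,j')) * (∑ i, star (ψ (i,j)) * ψ (i,j')) := by
  rw [hswap23 (fun i i' j j' => ψ (i',j') * (ρ (i,j) (i,j') * star (ψ (i',j))))]
  rw [Finset.sum_comm]
  refine Finset.sum_congr rfl fun j _ => ?_
  rw [show (∑ i, ∑ i', ∑ j', ψ (i',j') * (ρ (i,j) (i,j') * star (ψ (i',j))))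
      = ∑ i, ∑ j', ∑ i', ψ (i',j') * (ρ (i,j) (i,j') * star (ψ (i',j))) from
    Finset.sum_congr rfl fun _ _ => Finset.sum_comm]
  rw [Finset.sum_comm]
  refine Finset.sum_congr rfl fun j' _ => ?_
  rw [Fintype.sum_mul_sum]
  exact Finset.sum_congr rfl fun i _ => Finset.sum_congr rfl fun i' _ => by ring

lemma t14 : (∑ i, ∑ i', ∑ j, ∑ j', ψ (i',j') * (ρ (i,j) (i',j') * star (ψ (i,j))))
    = star ψ ⬝ᵥ ρ *ᵥ ψ := by
  rw [show star ψ ⬝ᵥ ρ *ᵥ ψ = ∑ i, ∑ j, ∑ i', ∑ j', star (ψ (i,j)) * (ρ (i,j) (i',j') * ψ (i',j'))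
    from by simp [dotProduct, mulVec, Finset.mul_sum, Fintype.sum_prod_type, mul_assoc]]
  rw [hswap23 (fun i i' j j' => ψ (i',j') * (ρ (i,j) (i',j') * star (ψ (i,j))))]
  exact Finset.sum_congr rfl fun _ _ => Finset.sum_congr rfl fun _ _ =>
    Finset.sum_congr rfl fun _ _ => Finset.sum_congr rfl fun _ _ => by ring

lemma t21 : (∑ i, ∑ i', ∑ j, ∑ j', ψ (i,j') * (ρ (i',j) (i,j) * star (ψ (i',j'))))
    = ∑ i, ∑ i', (∑ j, ρ (i,j) (i',j)) * (∑ j, star (ψ (i,j)) * ψ (i',j)) :=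
  (hswapI (fun i i' j j' => ψ (i,j') * (ρ (i',j) (i,j) * star (ψ (i',j'))))).trans (t12 ρ ψ)

lemma t22 : (∑ i, ∑ i', ∑ j, ∑ j', ψ (i,j') * (ρ (i',j) (i',j) * star (ψ (i,j'))))
    = (∑ x, ρ x x) * (∑ x, star (ψ x) * ψ x) :=
  (hswapI (fun i i' j j' => ψ (i,j') * (ρ (i',j) (i',j) * star (ψ (i,j'))))).trans (t11 ρ ψ)

lemma t33 : (∑ i, ∑ i', ∑ j, ∑ j', ψ (i',j) * (ρ (i,j') (i,j') * star (ψ (i',j))))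
    = (∑ x, ρ x x) * (∑ x, star (ψ x) * ψ x) :=
  (hswapJ (fun i i' j j' => ψ (i',j) * (ρ (i,j') (i,j') * star (ψ (i',j))))).trans (t11 ρ ψ)

lemma t44 : (∑ i, ∑ i', ∑ j, ∑ j', ψ (i,j) * (ρ (i',j') (i',j') * star (ψ (i,j))))
    = (∑ x, ρ x x) * (∑ x, star (ψ x) * ψ x) :=
  (hswapI (fun i i' j j' => ψ (i,j) * (ρ (i',j') (i',j') * star (ψ (i,j))))).trans (t33 ρ ψ)

lemma t34 : (∑ i, ∑ i', ∑ j, ∑ j', ψ (i',j) * (ρ (i,j') (i',j') * star (ψ (i,j))))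
    = ∑ i, ∑ i', (∑ j, ρ (i,j) (i',j)) * (∑ j, star (ψ (i,j)) * ψ (i',j)) :=
  (hswapJ (fun i i' j j' => ψ (i',j) * (ρ (i,j') (i',j') * star (ψ (i,j))))).trans (t12 ρ ψ)

lemma t43 : (∑ i, ∑ i', ∑ j, ∑ j', ψ (i,j) * (ρ (i',j') (i,j') * star (ψ (i',j))))
    = ∑ i, ∑ i', (∑ j, ρ (i,j) (i',j)) * (∑ j, star (ψ (i,j)) * ψ (i',j)) :=
  (hswapI (fun i i' j j' => ψ (i,j) * (ρ (i',j') (i,j') * star (ψ (i',j))))).trans (t34 ρ ψ)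

lemma t31 : (∑ i, ∑ i', ∑ j, ∑ j', ψ (i',j) * (ρ (i,j') (i,j) * star (ψ (i',j'))))
    = ∑ j, ∑ j', (∑ i, ρ (i,j) (i,j')) * (∑ i, star (ψ (i,j)) * ψ (i,j')) :=
  (hswapJ (fun i i' j j' => ψ (i',j) * (ρ (i,j') (i,j) * star (ψ (i',j'))))).trans (t13 ρ ψ)

lemma t24 : (∑ i, ∑ i', ∑ j, ∑ j', ψ (i,j') * (ρ (i',j) (i',j') * star (ψ (i,j))))
    = ∑ j, ∑ j', (∑ i, ρ (i,j) (i,j')) * (∑ i, star (ψ (i,j)) * ψ (i,j')) :=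
  (hswapI (fun i i' j j' => ψ (i,j') * (ρ (i',j) (i',j') * star (ψ (i,j))))).trans (t13 ρ ψ)

lemma t42 : (∑ i, ∑ i', ∑ j, ∑ j', ψ (i,j) * (ρ (i',j') (i',j) * star (ψ (i,j'))))
    = ∑ j, ∑ j', (∑ i, ρ (i,j) (i,j')) * (∑ i, star (ψ (i,j)) * ψ (i,j')) :=
  (hswapI (fun i i' j j' => ψ (i,j) * (ρ (i',j') (i',j) * star (ψ (i,j'))))).trans (t31 ρ ψ)

lemma t23 : (∑ i, ∑ i', ∑ j, ∑ j', ψ (i,j') * (ρ (i',j) (i,j') * star (ψ (i',j))))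
    = star ψ ⬝ᵥ ρ *ᵥ ψ :=
  (hswapI (fun i i' j j' => ψ (i,j') * (ρ (i',j) (i,j') * star (ψ (i',j))))).trans (t14 ρ ψ)

lemma t32 : (∑ i, ∑ i', ∑ j, ∑ j', ψ (i',j) * (ρ (i,j') (i',j) * star (ψ (i,j'))))
    = star ψ ⬝ᵥ ρ *ᵥ ψ :=
  (hswapJ (fun i i' j j' => ψ (i',j) * (ρ (i,j') (i',j) * star (ψ (i,j'))))).trans (t14 ρ ψ)

lemma t41 : (∑ i, ∑ i', ∑ j, ∑ j', ψ (i,j) * (ρ (i',j') (i,j) * star (ψ (i',j'))))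
    = star ψ ⬝ᵥ ρ *ᵥ ψ :=
  (hswapI (fun i i' j j' => ψ (i,j) * (ρ (i',j') (i,j) * star (ψ (i',j'))))).trans (t32 ρ ψ)

lemma key_sum :
    (∑ i, ∑ i', ∑ j, ∑ j', star (kvec ψ i i' j j') ⬝ᵥ ρ *ᵥ kvec ψ i i' j j')
    = 4 * ((∑ x, ρ x x) * (∑ x, star (ψ x) * ψ x)
        - (∑ i, ∑ i', (∑ j, ρ (i,j) (i',j)) * (∑ j, star (ψ (i,j)) * ψ (i',j)))
        - (∑ j, ∑ j', (∑ i, ρ (i,j) (i,j')) * (∑ i, star (ψ (i,j)) * ψ (i,j')))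
        + star ψ ⬝ᵥ ρ *ᵥ ψ) := by
  have h : ∀ i i' j j', star (kvec ψ i i' j j') ⬝ᵥ ρ *ᵥ kvec ψ i i' j j' = _ := term_eq ρ ψ
  calc (∑ i, ∑ i', ∑ j, ∑ j', star (kvec ψ i i' j j') ⬝ᵥ ρ *ᵥ kvec ψ i i' j j')
      = ∑ i, ∑ i', ∑ j, ∑ j',
        ((ψ (i',j') * (ρ (i,j) (i,j) * star (ψ (i',j')))
          - ψ (i',j') * (ρ (i,j) (i',j) * star (ψ (i,j')))
          - ψ (i',j') * (ρ (i,j) (i,j') * star (ψ (i',j)))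
          + ψ (i',j') * (ρ (i,j) (i',j') * star (ψ (i,j))))
         - (ψ (i,j') * (ρ (i',j) (i,j) * star (ψ (i',j')))
          - ψ (i,j') * (ρ (i',j) (i',j) * star (ψ (i,j')))
          - ψ (i,j') * (ρ (i',j) (i,j') * star (ψ (i',j)))
          + ψ (i,j') * (ρ (i',j) (i',j') * star (ψ (i,j))))
         - (ψ (i',j) * (ρ (i,j') (i,j) * star (ψ (i',j')))
          - ψ (i',j) * (ρ (i,j') (i',j) * star (ψ (i,j')))
          - ψ (i',j) * (ρ (i,j') (i,j') * star (ψ (i',j)))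
          + ψ (i',j) * (ρ (i,j') (i',j') * star (ψ (i,j))))
         + (ψ (i,j) * (ρ (i',j') (i,j) * star (ψ (i',j')))
          - ψ (i,j) * (ρ (i',j') (i',j) * star (ψ (i,j')))
          - ψ (i,j) * (ρ (i',j') (i,j') * star (ψ (i',j)))
          + ψ (i,j) * (ρ (i',j') (i',j') * star (ψ (i,j))))) :=
        Finset.sum_congr rfl fun i _ => Finset.sum_congr rfl fun i' _ =>
          Finset.sum_congr rfl fun j _ => Finset.sum_congr rfl fun j' _ => term_eq ρ ψ i i' j j'
    _ = _ := by
        simp only [Finset.sum_sub_distrib, Finset.sum_add_distrib]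
        rw [t11 ρ ψ, t12 ρ ψ, t13 ρ ψ, t14 ρ ψ, t21 ρ ψ, t22 ρ ψ, t23 ρ ψ, t24 ρ ψ,
          t31 ρ ψ, t32 ρ ψ, t33 ρ ψ, t34 ρ ψ, t41 ρ ψ, t42 ρ ψ, t43 ρ ψ, t44 ρ ψ]
        ring

lemma kronA (A : Matrix (Fin dA) (Fin dA) ℂ) :
    star ψ ⬝ᵥ ((A ⊗ₖ (1 : Matrix (Fin dB) (Fin dB) ℂ)) *ᵥ ψ)
    = ∑ i, ∑ i', A i i' * (∑ j, star (ψ (i,j)) * ψ (i',j)) := by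
  have h1 : star ψ ⬝ᵥ ((A ⊗ₖ (1 : Matrix (Fin dB) (Fin dB) ℂ)) *ᵥ ψ)
      = ∑ i, ∑ j, ∑ i', star (ψ (i,j)) * (A i i' * ψ (i',j)) := by
    simp [dotProduct, mulVec, kroneckerMap_apply, Matrix.one_apply, Fintype.sum_prod_type,
      Finset.mul_sum, mul_ite, ite_mul, mul_zero, zero_mul, mul_one, mul_assoc]
  rw [h1]
  rw [show (∑ i, ∑ j, ∑ i', star (ψ (i,j)) * (A i i' * ψ (i',j)))
      = ∑ i, ∑ i', ∑ j, star (ψ (i,j)) * (A i i' * ψ (i',j)) from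
    Finset.sum_congr rfl fun _ _ => Finset.sum_comm]
  refine Finset.sum_congr rfl fun i _ => Finset.sum_congr rfl fun i' _ => ?_
  rw [Finset.mul_sum]
  exact Finset.sum_congr rfl fun j _ => by ring

lemma kronB (B : Matrix (Fin dB) (Fin dB) ℂ) :
    star ψ ⬝ᵥ (((1 : Matrix (Fin dA) (Fin dA) ℂ) ⊗ₖ B) *ᵥ ψ)
    = ∑ j, ∑ j', B j j' * (∑ i, star (ψ (i,j)) * ψ (i,j')) := by
  have h1 : star ψ ⬝ᵥ (((1 : Matrix (Fin dA) (Fin dA) ℂ) ⊗ₖ B) *ᵥ ψ)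
      = ∑ i, ∑ j, ∑ j', star (ψ (i,j)) * (B j j' * ψ (i,j')) := by
    simp [dotProduct, mulVec, kroneckerMap_apply, Matrix.one_apply, Fintype.sum_prod_type,
      Finset.mul_sum, mul_ite, ite_mul, mul_zero, zero_mul, one_mul, mul_assoc]
  rw [h1, Finset.sum_comm]
  refine Finset.sum_congr rfl fun j _ => ?_
  rw [Finset.sum_comm]
  refine Finset.sum_congr rfl fun j' _ => ?_
  rw [Finset.mul_sum]
  exact Finset.sum_congr rfl fun i _ => by ring

lemma ptraceA_herm (hH : ρᴴ = ρ) : (ptraceA ρ)ᴴ = ptraceA ρ := by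
  ext i i'
  simp only [conjTranspose_apply, ptraceA, Matrix.of_apply, star_sum]
  refine Finset.sum_congr rfl fun j _ => ?_
  calc star (ρ (i',j) (i,j)) = ρᴴ (i,j) (i',j) := (conjTranspose_apply ρ _ _).symm
  _ = ρ (i,j) (i',j) := by rw [hH]

lemma ptraceB_herm (hH : ρᴴ = ρ) : (ptraceB ρ)ᴴ = ptraceB ρ := by
  ext j j'
  simp only [conjTranspose_apply, ptraceB, Matrix.of_apply, star_sum]
  refine Finset.sum_congr rfl fun i _ => ?_
  calc star (ρ (i,j') (i,j)) = ρᴴ (i,j) (i,j') := (conjTranspose_apply ρ _ _).symm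
  _ = ρ (i,j) (i,j') := by rw [hH]

lemma inverter_expand (hH : ρᴴ = ρ) :
    star ψ ⬝ᵥ (inverter ρ *ᵥ ψ) =
      (∑ x, ρ x x) * (∑ x, star (ψ x) * ψ x)
      - (∑ i, ∑ i', (∑ j, ρ (i,j) (i',j)) * (∑ j, star (ψ (i,j)) * ψ (i',j)))
      - (∑ j, ∑ j', (∑ i, ρ (i,j) (i,j')) * (∑ i, star (ψ (i,j)) * ψ (i,j')))
      + star ψ ⬝ᵥ ρ *ᵥ ψ := by
  rw [inverter, hH, ptraceA_herm ρ hH, ptraceB_herm ρ hH]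
  rw [add_mulVec, sub_mulVec, sub_mulVec, dotProduct_add, dotProduct_sub, dotProduct_sub,
    smul_mulVec, one_mulVec, dotProduct_smul, smul_eq_mul, kronA, kronB]
  simp only [Matrix.trace, Matrix.diag, dotProduct, Pi.star_apply, ptraceA, ptraceB,
    Matrix.of_apply]

lemma kron_conjT (M : Matrix (Fin dA) (Fin dA) ℂ) (N : Matrix (Fin dB) (Fin dB) ℂ) :
    (M ⊗ₖ N)ᴴ = Mᴴ ⊗ₖ Nᴴ := by
  ext x y
  simp [conjTranspose_apply, kroneckerMap_apply, mul_comm]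

lemma inverter_herm (hH : ρᴴ = ρ) : (inverter ρ).IsHermitian := by
  have htr : star (Matrix.trace ρ) = Matrix.trace ρ := by
    rw [← Matrix.trace_conjTranspose, hH]
  show (inverter ρ)ᴴ = inverter ρ
  rw [inverter, hH]
  rw [conjTranspose_add, conjTranspose_sub, conjTranspose_sub, conjTranspose_smul,
    conjTranspose_one, htr, hH, kron_conjT, kron_conjT, conjTranspose_one,
    conjTranspose_one, conjTranspose_conjTranspose, conjTranspose_conjTranspose,
    ptraceA_herm ρ hH, ptraceB_herm ρ hH]

end

end InverterAux

/-- The universal state inverter preserves positivity: if ρ is positive semidefinite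
then so is ρ̃; in particular ⟨ψ| ρ̃ |ψ⟩ ≥ 0 for every vector ψ. -/
theorem inverter_posSemidef {dA dB : ℕ}
    (ρ : Matrix (Fin dA × Fin dB) (Fin dA × Fin dB) ℂ) (hρ : ρ.PosSemidef) :
    (inverter ρ).PosSemidef ∧
      ∀ ψ : Fin dA × Fin dB → ℂ, 0 ≤ (star ψ ⬝ᵥ (inverter ρ *ᵥ ψ)).re := by
  have hH : ρᴴ = ρ := hρ.1
  have herm := InverterAux.inverter_herm ρ hH
  have pos : ∀ ψ : Fin dA × Fin dB → ℂ, 0 ≤ star ψ ⬝ᵥ (inverter ρ *ᵥ ψ) := by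
    intro ψ
    have hk : (∑ i, ∑ i', ∑ j, ∑ j',
        star (InverterAux.kvec ψ i i' j j') ⬝ᵥ ρ *ᵥ InverterAux.kvec ψ i i' j j')
        = 4 * (star ψ ⬝ᵥ (inverter ρ *ᵥ ψ)) := by
      rw [InverterAux.inverter_expand ρ ψ hH]
      exact InverterAux.key_sum ρ ψ
    have h4 : (0:ℂ) ≤ 4 * (star ψ ⬝ᵥ (inverter ρ *ᵥ ψ)) := by
      rw [← hk]
      exact Finset.sum_nonneg fun i _ => Finset.sum_nonneg fun i' _ =>
        Finset.sum_nonneg fun j _ => Finset.sum_nonneg fun j' _ => hρ.dotProduct_mulVec_nonneg _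
    have h14 : (0:ℂ) ≤ 4⁻¹ := by
      rw [show ((4:ℂ)⁻¹ : ℂ) = ((4⁻¹ : ℝ) : ℂ) by norm_num]
      exact Complex.zero_le_real.mpr (by norm_num)
    have := mul_nonneg h14 h4
    calc (0:ℂ) ≤ 4⁻¹ * (4 * (star ψ ⬝ᵥ (inverter ρ *ᵥ ψ))) := this
    _ = star ψ ⬝ᵥ (inverter ρ *ᵥ ψ) := by ring
  refine ⟨.of_dotProduct_mulVec_nonneg herm pos, fun ψ => ?_⟩
  have := pos ψ
  rw [Complex.le_def] at this
  simpa using this.1
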